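/- For every real h > 0, the function K_h(z) = Σ_{m=0}^∞ ((h)_m² / ((2h)_m m!)) z^{h+m} satisfies the Casimir differential equation z²(1−z) K_h''(z) − z² K_h'(z) = h(h−1) K_h(z) for all z in (0,1). -/

import Mathlib

/-- Pochhammer symbol `(x)_m = x(x+1)⋯(x+m−1)`, with `(x)_0 = 1`. -/
noncomputable def poch (x : ℝ) : ℕ → ℝ
  | 0 => 1
  | m + 1 => poch x m * (x + m)

/-- sl(2) conformal block `K_h(z) = Σ_m ((h)_m² / ((2h)_m m!)) z^{h+m}`. -/
noncomputable def Kblock (h z : ℝ) : ℝ :=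
  ∑' m : ℕ, (poch h m)^2 / (poch (2*h) m * (m.factorial : ℝ)) * z ^ (h + (m : ℝ))

open Filter Real Set

/-- The coefficient of the block series. -/
noncomputable def cc (h : ℝ) (m : ℕ) : ℝ :=
  (poch h m)^2 / (poch (2*h) m * (m.factorial : ℝ))

lemma poch_pos {x : ℝ} (hx : 0 < x) : ∀ m, 0 < poch x m
  | 0 => one_pos
  | m + 1 => mul_pos (poch_pos hx m) (by positivity)

lemma cc_pos {h : ℝ} (hh : 0 < h) (m : ℕ) : 0 < cc h m := by
  have h1 := poch_pos hh m
  have h2 := poch_pos (by linarith : (0:ℝ) < 2*h) m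
  have h3 : (0:ℝ) < (m.factorial : ℝ) := by positivity
  exact div_pos (pow_pos h1 2) (mul_pos h2 h3)

lemma cc_rec {h : ℝ} (hh : 0 < h) (n : ℕ) :
    cc h (n+1) * (((n:ℝ)+1) * (2*h+n)) = cc h n * (h+n)^2 := by
  have h2 : poch (2*h) n ≠ 0 := (poch_pos (by linarith : (0:ℝ) < 2*h) n).ne'
  have h3 : ((n.factorial : ℝ)) ≠ 0 := by positivity
  have h4 : (2*h + (n:ℝ)) ≠ 0 := by positivity
  have h5 : ((n:ℝ)+1) ≠ 0 := by positivity
  simp only [cc, poch, Nat.factorial_succ]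
  push_cast
  field_simp

lemma summable_master {h r : ℝ} (hh : 0 < h) (hr0 : 0 < r) (hr1 : r < 1) :
    Summable (fun n : ℕ => cc h n * ((h+n) * ((h+n+1) * r^n))) := by
  have fpos : ∀ n : ℕ, 0 < cc h n * ((h+n) * ((h+n+1) * r^n)) := fun n => by
    have h0 := cc_pos hh n
    have h1 : (0:ℝ) < h + n := by positivity
    have h2 : (0:ℝ) < h + n + 1 := by linarith
    positivity
  apply summable_of_ratio_test_tendsto_lt_one hr1
    (Filter.Eventually.of_forall fun n => (fpos n).ne')
  have key : ∀ n : ℕ,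
      r * (((h+(n:ℝ))/((n:ℝ)+1)) * ((h+(n:ℝ)+2)/(2*h+(n:ℝ)))) =
      ‖cc h (n+1) * ((h+(n+1:ℕ)) * ((h+(n+1:ℕ)+1) * r^(n+1)))‖ /
      ‖cc h n * ((h+n) * ((h+n+1) * r^n))‖ := by
    intro n
    rw [Real.norm_of_nonneg (fpos (n+1)).le, Real.norm_of_nonneg (fpos n).le]
    have hrec := cc_rec hh n
    have hccn := (cc_pos hh n).ne'
    have h4 : (2*h + (n:ℝ)) ≠ 0 := by positivity
    have h5 : ((n:ℝ)+1) ≠ 0 := by positivity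
    have h6 : (h + (n:ℝ)) ≠ 0 := by positivity
    have h7 : (h + (n:ℝ)+1) ≠ 0 := by positivity
    have h8 : (h + (n:ℝ)+2) ≠ 0 := by positivity
    have hrn : r^n ≠ 0 := by positivity
    have hcc1 : cc h (n+1) = cc h n * (h+n)^2 / (((n:ℝ)+1) * (2*h+n)) := by
      rw [eq_div_iff (by positivity)]
      exact hrec
    rw [hcc1]
    push_cast
    field_simp
    ring
  have t1 : Tendsto (fun n : ℕ => ((n:ℝ)+1)) atTop atTop :=
    tendsto_atTop_add_const_right atTop 1 tendsto_natCast_atTop_atTop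
  have t2 : Tendsto (fun n : ℕ => (2*h+(n:ℝ))) atTop atTop :=
    tendsto_atTop_add_const_left atTop (2*h) tendsto_natCast_atTop_atTop
  have l1 : Tendsto (fun n : ℕ => (h-1)/((n:ℝ)+1)) atTop (nhds 0) :=
    Filter.Tendsto.div_atTop tendsto_const_nhds t1
  have l2 : Tendsto (fun n : ℕ => (2-h)/(2*h+(n:ℝ))) atTop (nhds 0) :=
    Filter.Tendsto.div_atTop tendsto_const_nhds t2
  have m1 : Tendsto (fun n : ℕ => (h+(n:ℝ))/((n:ℝ)+1)) atTop (nhds 1) := by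
    have := l1.const_add (1:ℝ)
    rw [add_zero] at this
    refine this.congr fun n => ?_
    have h5 : ((n:ℝ)+1) ≠ 0 := by positivity
    field_simp
    ring
  have m2 : Tendsto (fun n : ℕ => (h+(n:ℝ)+2)/(2*h+(n:ℝ))) atTop (nhds 1) := by
    have := l2.const_add (1:ℝ)
    rw [add_zero] at this
    refine this.congr fun n => ?_
    have h4 : (2*h + (n:ℝ)) ≠ 0 := by positivity
    field_simp
    ring
  have mt : Tendsto (fun n : ℕ =>
      ((h+(n:ℝ))/((n:ℝ)+1)) * ((h+(n:ℝ)+2)/(2*h+(n:ℝ)))) atTop (nhds 1) := by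
    have := m1.mul m2
    rwa [one_mul] at this
  have final := mt.const_mul r
  rw [mul_one] at final
  exact final.congr key

lemma summable_weighted {h r : ℝ} (hh : 0 < h) (hr0 : 0 < r) (hr1 : r < 1)
    {w : ℕ → ℝ} {C : ℝ} (hw : ∀ n : ℕ, |w n| ≤ C * ((h+n)*(h+n+1))) :
    Summable (fun n : ℕ => cc h n * (w n * r^n)) := by
  refine Summable.of_norm_bounded ((summable_master hh hr0 hr1).mul_left C) fun n => ?_
  have hcc := cc_pos hh n
  have hrn : (0:ℝ) ≤ r^n := by positivity
  rw [norm_mul, norm_mul, Real.norm_of_nonneg hcc.le, Real.norm_eq_abs (w n),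
    Real.norm_of_nonneg hrn]
  calc cc h n * (|w n| * r^n) ≤ cc h n * ((C * ((h+n)*(h+n+1))) * r^n) := by
        gcongr
        exact hw n
    _ = C * (cc h n * ((h+n)*((h+n+1)*r^n))) := by ring

lemma rpow_bound {ε r y : ℝ} (hε : 0 < ε) (hy1 : ε < y) (hy2 : y ≤ r) (p : ℝ) :
    y ^ p ≤ ε ^ p + r ^ p := by
  have hy0 : 0 < y := lt_trans hε hy1
  rcases le_or_gt 0 p with hp | hp
  · have h1 : y ^ p ≤ r ^ p := Real.rpow_le_rpow hy0.le hy2 hp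
    have h2 : (0:ℝ) ≤ ε ^ p := (Real.rpow_pos_of_pos hε p).le
    linarith
  · have h1 : y ^ p ≤ ε ^ p := Real.rpow_le_rpow_of_nonpos hε hy1.le hp.le
    have h2 : (0:ℝ) ≤ r ^ p := (Real.rpow_pos_of_pos (lt_of_lt_of_le hy0 hy2) p).le
    linarith

lemma rpow_split {y : ℝ} (hy : 0 < y) (a : ℝ) (n : ℕ) :
    y ^ (a + (n:ℝ)) = y ^ a * y ^ n := by
  rw [Real.rpow_add hy, Real.rpow_natCast]

/-- The sl(2) block is an eigenfunction of the conformal Casimir operator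
`D = z²(1−z)∂² − z²∂` with eigenvalue `h(h−1)`. -/
theorem stmt_17 (h : ℝ) (hh : 0 < h) :
    ∀ z ∈ Set.Ioo (0 : ℝ) 1,
      z^2 * (1 - z) * deriv (deriv (Kblock h)) z - z^2 * deriv (Kblock h) z
        = h * (h - 1) * Kblock h z := by
  rintro z ⟨hz0, hz1⟩
  set ε : ℝ := z/2 with hεdef
  set r : ℝ := (1+z)/2 with hrdef
  have hε : 0 < ε := by positivity
  have hεz : ε < z := by rw [hεdef]; linarith
  have hzr : z < r := by rw [hrdef]; linarith
  have hr0 : 0 < r := by positivity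
  have hr1 : r < 1 := by rw [hrdef]; linarith
  have hzs : z ∈ Set.Ioo ε r := ⟨hεz, hzr⟩
  -- derivatives of individual terms
  have hd0 : ∀ (n : ℕ), ∀ y ∈ Set.Ioo ε r, HasDerivAt (fun w : ℝ => cc h n * w ^ (h + (n:ℝ)))
      (cc h n * ((h + n) * y ^ (h - 1 + (n:ℝ)))) y := by
    intro n y hy
    have hy0 : y ≠ 0 := (lt_trans hε hy.1).ne'
    have := (Real.hasDerivAt_rpow_const (x := y) (p := h + n) (Or.inl hy0)).const_mul (cc h n)
    refine this.congr_deriv ?_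
    rw [show h + (n:ℝ) - 1 = h - 1 + n by ring]
  have hd1 : ∀ (n : ℕ), ∀ y ∈ Set.Ioo ε r,
      HasDerivAt (fun w : ℝ => cc h n * ((h + n) * w ^ (h - 1 + (n:ℝ))))
      (cc h n * ((h + n) * ((h + n - 1) * y ^ (h - 2 + (n:ℝ))))) y := by
    intro n y hy
    have hy0 : y ≠ 0 := (lt_trans hε hy.1).ne'
    have hfun : (fun w : ℝ => cc h n * ((h+n) * w ^ (h-1+(n:ℝ)))) =
        fun w : ℝ => (cc h n * (h+n)) * w ^ (h-1+(n:ℝ)) := by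
      funext w; ring
    rw [hfun]
    have := (Real.hasDerivAt_rpow_const (x := y) (p := h - 1 + n) (Or.inl hy0)).const_mul
      (cc h n * (h + n))
    refine this.congr_deriv ?_
    rw [show h - 1 + (n:ℝ) - 1 = h - 2 + n by ring]
    ring
  -- bounds on the strip
  have hb1 : ∀ (n : ℕ), ∀ y ∈ Set.Ioo ε r,
      ‖cc h n * ((h+n) * y ^ (h-1+(n:ℝ)))‖ ≤
        (ε^(h-1)+r^(h-1)) * (cc h n * ((h+n)*((h+n+1)*r^n))) := by
    intro n y hy
    have hy0 : 0 < y := lt_trans hε hy.1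
    have hcc := cc_pos hh n
    have hhn : (0:ℝ) < h + n := by positivity
    have hM : (0:ℝ) ≤ ε^(h-1)+r^(h-1) := by positivity
    rw [Real.norm_of_nonneg (by positivity), rpow_split hy0]
    have e1 : y ^ (h-1) ≤ ε^(h-1)+r^(h-1) := rpow_bound hε hy.1 hy.2.le _
    have e2 : y ^ n ≤ r ^ n := pow_le_pow_left₀ hy0.le hy.2.le n
    have e3 : (0:ℝ) ≤ y ^ n := by positivity
    calc cc h n * ((h+n) * (y^(h-1) * y^n))
        ≤ cc h n * ((h+n) * ((ε^(h-1)+r^(h-1)) * r^n)) := by gcongr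
      _ = (ε^(h-1)+r^(h-1)) * (cc h n * ((h+n)*(1*r^n))) := by ring
      _ ≤ (ε^(h-1)+r^(h-1)) * (cc h n * ((h+n)*((h+n+1)*r^n))) := by
          gcongr
          linarith [Nat.cast_nonneg (α := ℝ) n]
  have hb2 : ∀ (n : ℕ), ∀ y ∈ Set.Ioo ε r,
      ‖cc h n * ((h+n) * ((h+n-1) * y ^ (h-2+(n:ℝ))))‖ ≤
        (ε^(h-2)+r^(h-2)) * (cc h n * ((h+n)*((h+n+1)*r^n))) := by
    intro n y hy
    have hy0 : 0 < y := lt_trans hε hy.1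
    have hcc := cc_pos hh n
    have hhn : (0:ℝ) < h + n := by positivity
    have hyp : (0:ℝ) < y ^ (h-2+(n:ℝ)) := Real.rpow_pos_of_pos hy0 _
    have hnn : (0:ℝ) ≤ (n:ℝ) := Nat.cast_nonneg n
    have e0 : |h+(n:ℝ)-1| ≤ h+n+1 := abs_le.mpr ⟨by linarith, by linarith⟩
    have e1 : y ^ (h-2) ≤ ε^(h-2)+r^(h-2) := rpow_bound hε hy.1 hy.2.le _
    have e2 : y ^ n ≤ r ^ n := pow_le_pow_left₀ hy0.le hy.2.le n
    have e3 : (0:ℝ) ≤ y ^ n := by positivity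
    have e4 : (0:ℝ) ≤ y ^ (h-2) := (Real.rpow_pos_of_pos hy0 _).le
    rw [show cc h n * ((h+n) * ((h+n-1) * y ^ (h-2+(n:ℝ)))) =
      (cc h n * (h+n) * y ^ (h-2+(n:ℝ))) * (h+n-1) by ring, norm_mul,
      Real.norm_of_nonneg (by positivity), Real.norm_eq_abs, rpow_split hy0]
    calc cc h n * (h+n) * (y^(h-2) * y^n) * |h+(n:ℝ)-1|
        ≤ cc h n * (h+n) * ((ε^(h-2)+r^(h-2)) * r^n) * (h+n+1) := by gcongr
      _ = (ε^(h-2)+r^(h-2)) * (cc h n * ((h+n)*((h+n+1)*r^n))) := by ring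
  -- summability of the bounding series
  have Su1 : Summable (fun n : ℕ => (ε^(h-1)+r^(h-1)) * (cc h n * ((h+n)*((h+n+1)*r^n)))) :=
    (summable_master hh hr0 hr1).mul_left _
  have Su2 : Summable (fun n : ℕ => (ε^(h-2)+r^(h-2)) * (cc h n * ((h+n)*((h+n+1)*r^n)))) :=
    (summable_master hh hr0 hr1).mul_left _
  have hnn : ∀ n : ℕ, (0:ℝ) ≤ (n:ℝ) := fun n => Nat.cast_nonneg n
  -- summabilities at the point z, via the weighted master series with ratio z
  have Sw0 : Summable (fun n : ℕ => cc h n * ((1:ℝ) * z^n)) := by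
    refine summable_weighted (C := 1/(h*(h+1))) hh hz0 hz1 fun n => ?_
    rw [abs_one, one_div, inv_mul_eq_div, le_div_iff₀ (by positivity)]
    nlinarith [hnn n]
  have S0 : Summable (fun n : ℕ => cc h n * z ^ (h + (n:ℝ))) := by
    refine (Sw0.mul_left (z ^ h)).congr fun n => ?_
    rw [rpow_split hz0]
    ring
  have Sw1 : Summable (fun n : ℕ => cc h n * ((h+(n:ℝ)) * z^n)) := by
    refine summable_weighted (C := 1/(h+1)) hh hz0 hz1 fun n => ?_
    rw [abs_of_nonneg (by positivity), one_div, inv_mul_eq_div, le_div_iff₀ (by positivity)]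
    nlinarith [hnn n]
  have S1 : Summable (fun n : ℕ => cc h n * ((h+n) * z ^ (h - 1 + (n:ℝ)))) := by
    refine (Sw1.mul_left (z ^ (h-1))).congr fun n => ?_
    rw [rpow_split hz0]
    ring
  have Sw2 : Summable (fun n : ℕ => cc h n * (((h+(n:ℝ))*(h+n-1)) * z^n)) := by
    refine summable_weighted (C := 1) hh hz0 hz1 fun n => ?_
    have e0 : |h+(n:ℝ)-1| ≤ h+n+1 := abs_le.mpr ⟨by linarith [hnn n], by linarith⟩
    rw [abs_mul, abs_of_nonneg (by positivity : (0:ℝ) ≤ h+(n:ℝ)), one_mul]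
    calc (h+(n:ℝ)) * |h+(n:ℝ)-1| ≤ (h+(n:ℝ)) * (h+n+1) := by
          gcongr
      _ = (h+(n:ℝ))*(h+(n:ℝ)+1) := by ring
  have S2 : Summable (fun n : ℕ => cc h n * ((h+n) * ((h+n-1) * z ^ (h - 2 + (n:ℝ))))) := by
    refine (Sw2.mul_left (z ^ (h-2))).congr fun n => ?_
    rw [rpow_split hz0]
    ring
  have SwP : Summable (fun n : ℕ => cc h n * (((h+(n:ℝ))*(h+n-1) - h*(h-1)) * z^n)) := by
    refine summable_weighted (C := 2) hh hz0 hz1 fun n => ?_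
    rw [abs_le]
    constructor
    · nlinarith [hnn n]
    · nlinarith [hnn n]
  have SP : Summable (fun n : ℕ =>
      cc h n * (((h+(n:ℝ))*(h+n-1) - h*(h-1)) * z ^ (h + (n:ℝ)))) := by
    refine (SwP.mul_left (z ^ h)).congr fun n => ?_
    rw [rpow_split hz0]
    ring
  have SwQ : Summable (fun n : ℕ => cc h n * (((h+(n:ℝ))^2) * z^n)) := by
    refine summable_weighted (C := 1) hh hz0 hz1 fun n => ?_
    rw [abs_of_nonneg (by positivity), one_mul]
    nlinarith [hnn n]
  have SQ : Summable (fun n : ℕ => cc h n * ((h+(n:ℝ))^2 * z ^ (h + (n:ℝ) + 1))) := by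
    refine (SwQ.mul_left (z ^ (h+1))).congr fun n => ?_
    rw [show h + (n:ℝ) + 1 = (h+1) + (n:ℝ) by ring, rpow_split hz0]
    ring
  -- first derivative of the block on the strip
  have hD1 : ∀ y ∈ Set.Ioo ε r, HasDerivAt (Kblock h)
      (∑' n : ℕ, cc h n * ((h+n) * y ^ (h - 1 + (n:ℝ)))) y := by
    intro y hy
    exact hasDerivAt_tsum_of_isPreconnected Su1 isOpen_Ioo isPreconnected_Ioo
      hd0 hb1 hzs S0 hy
  have hK'eq : ∀ y ∈ Set.Ioo ε r, deriv (Kblock h) y =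
      ∑' n : ℕ, cc h n * ((h+n) * y ^ (h - 1 + (n:ℝ))) := fun y hy => (hD1 y hy).deriv
  -- second derivative at z
  have hD2 : HasDerivAt (fun w : ℝ => ∑' n : ℕ, cc h n * ((h+n) * w ^ (h - 1 + (n:ℝ))))
      (∑' n : ℕ, cc h n * ((h+n) * ((h+n-1) * z ^ (h - 2 + (n:ℝ))))) z :=
    hasDerivAt_tsum_of_isPreconnected Su2 isOpen_Ioo isPreconnected_Ioo hd1 hb2 hzs S1 hzs
  have hKd1 : deriv (Kblock h) z = ∑' n : ℕ, cc h n * ((h+n) * z ^ (h - 1 + (n:ℝ))) :=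
    hK'eq z hzs
  have hKd2 : deriv (deriv (Kblock h)) z =
      ∑' n : ℕ, cc h n * ((h+n) * ((h+n-1) * z ^ (h - 2 + (n:ℝ)))) := by
    have heq : deriv (Kblock h) =ᶠ[nhds z]
        (fun w : ℝ => ∑' n : ℕ, cc h n * ((h+n) * w ^ (h - 1 + (n:ℝ)))) :=
      Filter.eventuallyEq_of_mem (isOpen_Ioo.mem_nhds hzs) hK'eq
    rw [heq.deriv_eq]
    exact hD2.deriv
  have hK0 : Kblock h z = ∑' n : ℕ, cc h n * z ^ (h + (n:ℝ)) := rfl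
  rw [hKd1, hKd2, hK0, ← tsum_mul_left, ← tsum_mul_left, ← tsum_mul_left,
    ← Summable.tsum_sub (S2.mul_left (z^2*(1-z))) (S1.mul_left (z^2))]
  -- termwise identity
  have key : ∀ n : ℕ,
      z^2*(1-z) * (cc h n * ((h+n) * ((h+n-1) * z ^ (h - 2 + (n:ℝ))))) -
      z^2 * (cc h n * ((h+n) * z ^ (h - 1 + (n:ℝ)))) =
      h*(h-1) * (cc h n * z ^ (h + (n:ℝ))) +
      (cc h n * (((h+(n:ℝ))*(h+n-1) - h*(h-1)) * z ^ (h + (n:ℝ))) -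
       cc h n * ((h+(n:ℝ))^2 * z ^ (h + (n:ℝ) + 1))) := by
    intro n
    have hA1 : z ^ (h - 1 + (n:ℝ)) = z ^ (h - 2 + (n:ℝ)) * z := by
      rw [show h - 1 + (n:ℝ) = (h - 2 + (n:ℝ)) + 1 by ring, Real.rpow_add hz0, Real.rpow_one]
    have hA2 : z ^ (h + (n:ℝ)) = z ^ (h - 2 + (n:ℝ)) * z^2 := by
      rw [show h + (n:ℝ) = (h - 2 + (n:ℝ)) + ((2:ℕ):ℝ) by push_cast; ring,
        Real.rpow_add hz0, Real.rpow_natCast]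
    have hA3 : z ^ (h + (n:ℝ) + 1) = z ^ (h - 2 + (n:ℝ)) * z^3 := by
      rw [show h + (n:ℝ) + 1 = (h - 2 + (n:ℝ)) + ((3:ℕ):ℝ) by push_cast; ring,
        Real.rpow_add hz0, Real.rpow_natCast]
    rw [hA1, hA2, hA3]
    ring
  rw [tsum_congr key, Summable.tsum_add (S0.mul_left (h*(h-1))) (SP.sub SQ), Summable.tsum_sub SP SQ]
  -- the shifted sums cancel
  have hP0 : cc h 0 * (((h+((0:ℕ):ℝ))*(h+((0:ℕ):ℝ)-1) - h*(h-1)) * z ^ (h + ((0:ℕ):ℝ))) = 0 := by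
    norm_num
  have hPS : ∀ n : ℕ,
      cc h (n+1) * (((h+((n+1:ℕ):ℝ))*(h+((n+1:ℕ):ℝ)-1) - h*(h-1)) * z ^ (h + ((n+1:ℕ):ℝ))) =
      cc h n * ((h+(n:ℝ))^2 * z ^ (h + (n:ℝ) + 1)) := by
    intro n
    push_cast
    rw [show h + ((n:ℝ)+1) = h + (n:ℝ) + 1 by ring,
      show (h+(n:ℝ)+1)*(h+(n:ℝ)+1-1) - h*(h-1) = ((n:ℝ)+1)*(2*h+(n:ℝ)) by ring,
      show cc h (n+1) * ((((n:ℝ)+1)*(2*h+(n:ℝ))) * z ^ (h + (n:ℝ) + 1)) =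
        (cc h (n+1) * (((n:ℝ)+1)*(2*h+(n:ℝ)))) * z ^ (h + (n:ℝ) + 1) by ring,
      cc_rec hh n]
    ring
  have hcancel : (∑' n : ℕ, cc h n * (((h+(n:ℝ))*(h+(n:ℝ)-1) - h*(h-1)) * z ^ (h + (n:ℝ)))) =
      ∑' n : ℕ, cc h n * ((h+(n:ℝ))^2 * z ^ (h + (n:ℝ) + 1)) := by
    rw [Summable.tsum_eq_zero_add SP, hP0, zero_add]
    exact tsum_congr hPS
  rw [hcancel]
  ring
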